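/- Let n ≥ 1 be an integer, θ ∈ (0,1), c ≥ 1 an integer, F a finite family of nonempty subsets of {1,…,n}, and π : F → ℝ with π(S) > 0 for all S ∈ F. The function cost_θ(p) = Σ_{S∈F} π(S) / (1 − θ(1 − p(S))^c) is convex on the standard simplex {p ∈ ℝ^n : p_i ≥ 0 for all i, Σ_{i=1}^n p_i = 1}. -/
import Mathlib

/-- Composition of a convex monotone function with a convex function is convex. -/
lemma convexOn_comp_mono {E : Type*} [AddCommGroup E] [Module ℝ E]
    {g : ℝ → ℝ} {f : E → ℝ} {s : Set E} {t : Set ℝ}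
    (hg : ConvexOn ℝ t g) (hg' : MonotoneOn g t)
    (hf : ConvexOn ℝ s f) (hst : Set.MapsTo f s t) :
    ConvexOn ℝ s (fun x => g (f x)) :=
  ⟨hf.1, fun x hx y hy a b ha hb hab =>
    (hg' (hst (hf.1 hx hy ha hb hab)) (hg.1 (hst hx) (hst hy) ha hb hab)
        (hf.2 hx hy ha hb hab)).trans (hg.2 (hst hx) (hst hy) ha hb hab)⟩

/-- Composition of a convex antitone function with a concave function is convex. -/
lemma convexOn_comp_anti {E : Type*} [AddCommGroup E] [Module ℝ E]
    {g : ℝ → ℝ} {f : E → ℝ} {s : Set E} {t : Set ℝ}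
    (hg : ConvexOn ℝ t g) (hg' : AntitoneOn g t)
    (hf : ConcaveOn ℝ s f) (hst : Set.MapsTo f s t) :
    ConvexOn ℝ s (fun x => g (f x)) :=
  ⟨hf.1, fun x hx y hy a b ha hb hab =>
    (hg' (hg.1 (hst hx) (hst hy) ha hb hab) (hst (hf.1 hx hy ha hb hab))
        (hf.2 hx hy ha hb hab)).trans (hg.2 (hst hx) (hst hy) ha hb hab)⟩

/-- A finite sum of convex functions is convex. -/
lemma convexOn_finset_sum {E ι : Type*} [AddCommGroup E] [Module ℝ E]
    {s : Set E} (hs : Convex ℝ s) (t : Finset ι) {f : ι → E → ℝ}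
    (h : ∀ i ∈ t, ConvexOn ℝ s (f i)) :
    ConvexOn ℝ s (fun x => ∑ i ∈ t, f i x) := by
  classical
  induction t using Finset.induction_on with
  | empty => simpa using convexOn_const (0 : ℝ) hs
  | @insert a u hi ih =>
    simp only [Finset.sum_insert hi]
    exact (h a (Finset.mem_insert_self a u)).add
      (ih fun i hiu => h i (Finset.mem_insert_of_mem hiu))

/-- The inverse function is convex on `(0, ∞)`. -/
lemma convexOn_inv' : ConvexOn ℝ (Set.Ioi (0 : ℝ)) (fun x => x⁻¹) := by
  have := convexOn_zpow (𝕜 := ℝ) (-1)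
  simpa [zpow_neg, zpow_one] using this

/-- The cost function
`cost_θ(p) = Σ_{S∈F} π(S) / (1 − θ(1 − p(S))^c)` is convex on the standard simplex. -/
theorem stmt3 (n : ℕ) (hn : 1 ≤ n) (θ : ℝ) (hθ : θ ∈ Set.Ioo (0 : ℝ) 1)
    (c : ℕ) (hc : 1 ≤ c) (F : Finset (Finset (Fin n)))
    (hF : ∀ S ∈ F, S.Nonempty)
    (π : Finset (Fin n) → ℝ) (hπ : ∀ S ∈ F, 0 < π S) :
    ConvexOn ℝ (stdSimplex ℝ (Fin n))
      (fun p : Fin n → ℝ => ∑ S ∈ F, π S / (1 - θ * (1 - ∑ i ∈ S, p i) ^ c)) := by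
  obtain ⟨hθ0, hθ1⟩ := hθ
  set s := stdSimplex ℝ (Fin n) with hs_def
  have hs : Convex ℝ s := convex_stdSimplex ℝ (Fin n)
  refine convexOn_finset_sum hs F (fun S hS => ?_)
  -- basic bounds on the simplex: 0 ≤ ∑_{i∈S} p i ≤ 1
  have hsum_nonneg : ∀ p ∈ s, 0 ≤ ∑ i ∈ S, p i := fun p hp =>
    Finset.sum_nonneg fun i _ => hp.1 i
  have hsum_le_one : ∀ p ∈ s, ∑ i ∈ S, p i ≤ 1 := by
    intro p hp
    calc ∑ i ∈ S, p i ≤ ∑ i ∈ Finset.univ, p i :=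
          Finset.sum_le_sum_of_subset_of_nonneg (Finset.subset_univ S)
            (fun i _ _ => hp.1 i)
      _ = 1 := hp.2
  -- the affine function `p ↦ 1 - ∑ i ∈ S, p i` is both convex and concave on `s`
  have haff : ∀ p q : Fin n → ℝ, ∀ a b : ℝ, a + b = 1 →
      (1 - ∑ i ∈ S, (a • p + b • q) i) =
        a * (1 - ∑ i ∈ S, p i) + b * (1 - ∑ i ∈ S, q i) := by
    intro p q a b hab
    simp only [Pi.add_apply, Pi.smul_apply, smul_eq_mul]
    rw [Finset.sum_add_distrib, ← Finset.mul_sum, ← Finset.mul_sum]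
    nlinarith [hab]
  have hconv_aff : ConvexOn ℝ s (fun p : Fin n → ℝ => 1 - ∑ i ∈ S, p i) :=
    ⟨hs, fun p _ q _ a b _ _ hab => le_of_eq (by
      simp only [smul_eq_mul]; exact haff p q a b hab)⟩
  have hconc_aff : ConcaveOn ℝ s (fun p : Fin n → ℝ => 1 - ∑ i ∈ S, p i) :=
    ⟨hs, fun p _ q _ a b _ _ hab => ge_of_eq (by
      simp only [smul_eq_mul]; exact haff p q a b hab)⟩
  -- `p ↦ (1 - ∑ i ∈ S, p i) ^ c` is convex on `s`
  have hpow : ConvexOn ℝ s (fun p : Fin n → ℝ => (1 - ∑ i ∈ S, p i) ^ c) := by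
    refine convexOn_comp_mono (t := Set.Ici (0 : ℝ)) (convexOn_pow c)
      (fun a ha b hb hab => pow_le_pow_left₀ ha hab c) hconv_aff ?_
    intro p hp
    simp only [Set.mem_Ici, sub_nonneg]
    exact hsum_le_one p hp
  -- `D p = 1 - θ * (1 - ∑ i ∈ S, p i) ^ c` is concave on `s`
  have hD : ConcaveOn ℝ s (fun p : Fin n → ℝ => 1 - θ * (1 - ∑ i ∈ S, p i) ^ c) := by
    have h1 : ConvexOn ℝ s (fun p : Fin n → ℝ => θ * (1 - ∑ i ∈ S, p i) ^ c) := by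
      simpa [smul_eq_mul] using hpow.smul hθ0.le
    have h2 : ConcaveOn ℝ s (fun p : Fin n → ℝ => -(θ * (1 - ∑ i ∈ S, p i) ^ c)) :=
      h1.neg
    have h3 := h2.add (concaveOn_const (1 : ℝ) hs)
    simpa [Pi.add_def, sub_eq_neg_add, add_comm] using h3
  -- `D p > 0` on `s`
  have hDpos : ∀ p ∈ s, 0 < 1 - θ * (1 - ∑ i ∈ S, p i) ^ c := by
    intro p hp
    have h0 : (0 : ℝ) ≤ 1 - ∑ i ∈ S, p i := by
      have := hsum_le_one p hp; linarith
    have h1 : (1 - ∑ i ∈ S, p i) ≤ 1 := by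
      have := hsum_nonneg p hp; linarith
    have hpow_le : (1 - ∑ i ∈ S, p i) ^ c ≤ 1 := pow_le_one₀ h0 h1
    have hpow_nonneg : (0 : ℝ) ≤ (1 - ∑ i ∈ S, p i) ^ c := pow_nonneg h0 c
    nlinarith
  -- `p ↦ (D p)⁻¹` is convex on `s`
  have hinv : ConvexOn ℝ s (fun p : Fin n → ℝ =>
      (1 - θ * (1 - ∑ i ∈ S, p i) ^ c)⁻¹) := by
    refine convexOn_comp_anti (t := Set.Ioi (0 : ℝ)) convexOn_inv' ?_ hD ?_
    · intro a ha b hb hab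
      exact inv_anti₀ ha hab
    · intro p hp
      exact hDpos p hp
  -- multiply by the positive constant `π S`
  have := hinv.smul (hπ S hS).le
  simpa [smul_eq_mul, div_eq_mul_inv] using this
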